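/- Let X and Y be nonempty sets, r a natural number, and u : X × Y → ℝ. Suppose that for all m, n ≥ 1 and all sampling maps x : Fin m → X and y : Fin n → Y (repetitions allowed), the m × n matrix with entries u(x i, y j) has rank at most r. Then there exist functions g : Fin r → X → ℝ and h : Fin r → Y → ℝ such that u(a, b) = Σ_{α=1}^{r} g α a · h α b for all a ∈ X and b ∈ Y. -/

import Mathlib

open Submodule Module

/-- Evaluation of functions at a finite list of points, as a linear map. -/
noncomputable def evalPts {Y : Type*} {n : ℕ} (y : Fin n → Y) :
    (Y → ℝ) →ₗ[ℝ] (Fin n → ℝ) :=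
  LinearMap.pi fun j => LinearMap.proj (y j)

/-- For a finite-dimensional subspace `V` of functions on a nonempty type `Y`, there is
a finite nonempty family of points on which evaluation is injective on `V`. -/
lemma exists_eval_ker_bot {Y : Type*} (hY : Nonempty Y)
    (V : Submodule ℝ (Y → ℝ)) [FiniteDimensional ℝ V] :
    ∃ (n : ℕ) (y : Fin n → Y), 1 ≤ n ∧ V ⊓ LinearMap.ker (evalPts y) = ⊥ := by
  obtain ⟨b₀⟩ := hY
  set S : Set ℕ := {d | ∃ (n : ℕ) (y : Fin n → Y),
    finrank ℝ ↥(V ⊓ LinearMap.ker (evalPts y)) = d} with hS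
  have hne : S.Nonempty := ⟨_, 0, Fin.elim0, rfl⟩
  obtain ⟨n, y, hy⟩ := Nat.sInf_mem hne
  have hbot : V ⊓ LinearMap.ker (evalPts y) = ⊥ := by
    by_contra hne'
    obtain ⟨v, hv, hv0⟩ := (Submodule.ne_bot_iff _).mp hne'
    obtain ⟨b, hb⟩ : ∃ b, v b ≠ 0 := by
      by_contra hc; push_neg at hc; exact hv0 (funext hc)
    have hle : V ⊓ LinearMap.ker (evalPts (Fin.cons b y)) ≤
        V ⊓ LinearMap.ker (evalPts y) := by
      refine inf_le_inf_left _ ?_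
      intro w hw
      rw [LinearMap.mem_ker] at hw ⊢
      funext j
      have := congrFun hw j.succ
      simpa [evalPts] using this
    have hlt : V ⊓ LinearMap.ker (evalPts (Fin.cons b y)) <
        V ⊓ LinearMap.ker (evalPts y) := by
      refine lt_of_le_of_ne hle ?_
      intro hEq
      have hv' : v ∈ V ⊓ LinearMap.ker (evalPts (Fin.cons b y)) := hEq ▸ hv
      have := congrFun (LinearMap.mem_ker.mp hv'.2) 0
      simp [evalPts] at this
      exact hb this
    have hdim := Submodule.finrank_lt_finrank_of_lt hlt
    rw [hy] at hdim
    have hmemS : finrank ℝ ↥(V ⊓ LinearMap.ker (evalPts (Fin.cons b y))) ∈ S :=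
      ⟨n + 1, Fin.cons b y, rfl⟩
    exact absurd (Nat.sInf_le hmemS) (not_le.mpr hdim)
  refine ⟨n + 1, Fin.cons b₀ y, Nat.le_add_left 1 n, ?_⟩
  refine le_bot_iff.mp ?_
  rw [← hbot]
  refine inf_le_inf_left _ ?_
  intro w hw
  rw [LinearMap.mem_ker] at hw ⊢
  funext j
  have := congrFun hw j.succ
  simpa [evalPts] using this

/-- **Bivariate case of the functional tensor train decomposition.** If every
sampled matrix `(u (x i, y j))_{i,j}` of a bivariate function `u : X × Y → ℝ`
has rank at most `r`, then `u` admits a separable rank-`r` representation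
`u (a, b) = Σ_{α} g α a * h α b`. -/
theorem bivariate_bounded_sample_rank_separable
    (X Y : Type*) (hX : Nonempty X) (hY : Nonempty Y) (r : ℕ) (u : X × Y → ℝ)
    (hrank : ∀ (m n : ℕ), 1 ≤ m → 1 ≤ n → ∀ (x : Fin m → X) (y : Fin n → Y),
      (Matrix.of fun i j => u (x i, y j) : Matrix (Fin m) (Fin n) ℝ).rank ≤ r) :
    ∃ (g : Fin r → X → ℝ) (h : Fin r → Y → ℝ),
      ∀ (a : X) (b : Y), u (a, b) = ∑ α : Fin r, g α a * h α b := by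
  classical
  set v : X → (Y → ℝ) := fun a b => u (a, b) with hv
  -- Step 1: no (r+1)-element sampled family of slices is linearly independent.
  have key : ∀ (x : Fin (r + 1) → X), ¬ LinearIndependent ℝ (fun i => v (x i)) := by
    intro x hf
    haveI : FiniteDimensional ℝ (span ℝ (Set.range fun i => v (x i))) :=
      FiniteDimensional.span_of_finite ℝ (Set.finite_range _)
    obtain ⟨n, y, hn, hker⟩ :=
      exists_eval_ker_bot hY (span ℝ (Set.range fun i => v (x i)))
    have hdisj : Disjoint (span ℝ (Set.range fun i => v (x i)))
        (LinearMap.ker (evalPts y)) := disjoint_iff.mpr hker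
    have hind : LinearIndependent ℝ ((evalPts y) ∘ fun i => v (x i)) := hf.map hdisj
    have hMind : LinearIndependent ℝ
        (Matrix.of fun i j => u (x i, y j) : Matrix (Fin (r + 1)) (Fin n) ℝ) := hind
    have hR := hMind.rank_matrix
    have := hrank (r + 1) n (Nat.le_add_left 1 r) hn x y
    rw [hR] at this
    simp at this
  -- Step 2: maximal independent subfamily of the slices.
  obtain ⟨I, hI, hImax⟩ := exists_maximal_linearIndepOn ℝ v
  have hinj : ∀ (e : Fin (r + 1) → I), ¬ Function.Injective e := by
    intro e he
    exact key (fun i => (e i : X)) (hI.comp e he)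
  have hfin : I.Finite := by
    by_contra hinf
    have emb := Set.Infinite.natEmbedding I hinf
    exact hinj (fun i => emb i.val)
      (fun a b hab => Fin.val_injective (emb.injective hab))
  haveI := hfin.fintype
  set s := Fintype.card I with hs
  have hsr : s ≤ r := by
    by_contra hlt
    push_neg at hlt
    obtain ⟨e⟩ := Function.Embedding.nonempty_of_card_le
      (α := Fin (r + 1)) (β := I) (by rw [Fintype.card_fin]; exact hlt)
    exact hinj e e.injective
  set e : Fin s ≃ I := (Fintype.equivFin I).symm with he
  -- Step 3: every slice is in the span of the chosen family.
  have hmem : ∀ a, v a ∈ span ℝ (v '' I) := by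
    intro a
    by_cases ha : a ∈ I
    · exact subset_span ⟨a, ha, rfl⟩
    · obtain ⟨c, hc0, hc⟩ := hImax a ha
      have := Submodule.smul_mem _ c⁻¹ hc
      rwa [smul_smul, inv_mul_cancel₀ hc0, one_smul] at this
  have himg : v '' I = Set.range fun i : Fin s => v (e i) := by
    ext w
    constructor
    · rintro ⟨a, ha, rfl⟩
      exact ⟨e.symm ⟨a, ha⟩, by simp⟩
    · rintro ⟨i, rfl⟩
      exact ⟨e i, (e i).2, rfl⟩
  have hch : ∀ a, ∃ c : Fin s → ℝ, ∑ i, c i • v (e i) = v a := by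
    intro a
    exact (mem_span_range_iff_exists_fun ℝ).mp (himg ▸ hmem a)
  choose c hc using hch
  -- Step 4: assemble the representation, padding with zeros up to `r`.
  refine ⟨fun α a => if h : (α : ℕ) < s then c a ⟨α, h⟩ else 0,
          fun α b => if h : (α : ℕ) < s then v (e ⟨α, h⟩) b else 0, ?_⟩
  intro a b
  set G : ℕ → ℝ := fun α => if h : α < s then c a ⟨α, h⟩ * v (e ⟨α, h⟩) b else 0 with hG
  have hterm : ∀ α : Fin r,
      (if h : (α : ℕ) < s then c a ⟨α, h⟩ else 0) *
        (if h : (α : ℕ) < s then v (e ⟨α, h⟩) b else 0) = G α.val := by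
    intro α
    by_cases h : (α : ℕ) < s <;> simp [hG, h]
  calc u (a, b) = v a b := rfl
    _ = ∑ i : Fin s, c a i * v (e i) b := by
        rw [← hc a]
        simp [Finset.sum_apply]
    _ = ∑ i : Fin s, G i.val := by
        refine Finset.sum_congr rfl fun i _ => ?_
        simp [hG, i.isLt]
    _ = ∑ i ∈ Finset.range s, G i := Fin.sum_univ_eq_sum_range G s
    _ = ∑ i ∈ Finset.range r, G i := by
        refine Finset.sum_subset (Finset.range_subset_range.mpr hsr) ?_
        intro i hi his
        simp only [Finset.mem_range] at hi his
        simp [hG, his]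
    _ = ∑ α : Fin r, G α.val := (Fin.sum_univ_eq_sum_range G r).symm
    _ = ∑ α : Fin r, (if h : (α : ℕ) < s then c a ⟨α, h⟩ else 0) *
          (if h : (α : ℕ) < s then v (e ⟨α, h⟩) b else 0) :=
        (Finset.sum_congr rfl fun α _ => hterm α).symm
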